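/- Let ν > 0 and b₀ ∈ (0,1). Define 𝔟(t) = 1 + (1/b₀ − 1)e^{−νt} and b(t) = 1/𝔟(t). Then ∫₀ᵗ (1 − b(s)) ds ≤ −(1/ν) log(b₀ + (1 − b₀)e^{−νt}) ≤ −(1/ν) log b₀ for all t ≥ 0. -/

import Mathlib

open Real

theorem integral_estimate (ν b₀ : ℝ) (hν : 0 < ν) (hb₀ : b₀ ∈ Set.Ioo (0 : ℝ) 1)
    (𝔟 b : ℝ → ℝ)
    (h𝔟 : ∀ t, 𝔟 t = 1 + (1 / b₀ - 1) * Real.exp (-ν * t))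
    (hb : ∀ t, b t = 1 / 𝔟 t) :
    ∀ t, 0 ≤ t →
      (∫ s in (0:ℝ)..t, (1 - b s)) ≤
          -(1 / ν) * Real.log (b₀ + (1 - b₀) * Real.exp (-ν * t)) ∧
      -(1 / ν) * Real.log (b₀ + (1 - b₀) * Real.exp (-ν * t)) ≤ -(1 / ν) * Real.log b₀ := by
  obtain ⟨hb0, hb1⟩ := hb₀
  have hb0' : b₀ ≠ 0 := ne_of_gt hb0
  have hc : 0 < 1 - b₀ := by linarith
  have hν' : ν ≠ 0 := ne_of_gt hν
  set g : ℝ → ℝ := fun s => b₀ + (1 - b₀) * Real.exp (-ν * s) with hg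
  have hgpos : ∀ s, 0 < g s := fun s => by
    have := Real.exp_pos (-ν * s); simp only [hg]; positivity
  have hbfun : ∀ s, b s = b₀ / g s := by
    intro s
    have h𝔟s : 𝔟 s = g s / b₀ := by
      rw [h𝔟 s]; field_simp [hg]
      simp [hg]
    rw [hb s, h𝔟s]
    field_simp
  have hderiv : ∀ s, HasDerivAt (fun u => -(1 / ν) * Real.log (g u)) (1 - b s) s := by
    intro s
    have h1 : HasDerivAt g ((1 - b₀) * (Real.exp (-ν * s) * (-ν))) s := by
      have hlin : HasDerivAt (fun u : ℝ => -ν * u) (-ν) s := by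
        simpa using (hasDerivAt_id s).const_mul (-ν)
      exact ((hlin.exp).const_mul (1 - b₀)).const_add b₀
    have h2 := (h1.log (ne_of_gt (hgpos s))).const_mul (-(1 / ν))
    refine h2.congr_deriv ?_
    rw [hbfun s]
    field_simp [ne_of_gt (hgpos s)]
    simp only [hg]
    ring
  have hcont : Continuous fun s => 1 - b s := by
    have : (fun s => 1 - b s) = fun s => 1 - b₀ / g s := by
      funext s; rw [hbfun s]
    rw [this]
    exact continuous_const.sub (continuous_const.div
      (by continuity) (fun s => ne_of_gt (hgpos s)))
  intro t ht
  have hint : (∫ s in (0:ℝ)..t, (1 - b s)) =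
      -(1 / ν) * Real.log (g t) - -(1 / ν) * Real.log (g 0) :=
    intervalIntegral.integral_eq_sub_of_hasDerivAt (fun s _ => hderiv s)
      (hcont.intervalIntegrable 0 t)
  have hg0 : g 0 = 1 := by simp [hg]
  constructor
  · rw [hint, hg0]
    simp only [Real.log_one, mul_zero, sub_zero, hg]
    exact le_refl _
  · have hle : Real.log b₀ ≤ Real.log (g t) := by
      apply Real.log_le_log hb0
      show b₀ ≤ b₀ + (1 - b₀) * Real.exp (-ν * t)
      have := (Real.exp_pos (-ν * t)).le
      nlinarith
    have h1ν : 0 < 1 / ν := by positivity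
    nlinarith
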